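/- If a finite simple graph G has cutwidth at most w and maximum degree at most d, then G has carving width at most max(w, d). -/

import Mathlib

open scoped Classical

/-- A carving decomposition of a graph `G`: an unrooted tree whose leaves are
bijectively labeled by the vertices of `G` and whose internal vertices have
degree three. -/
structure CarvingDecomp {V : Type*} [Fintype V] (G : SimpleGraph V) where
  B : Type
  fin : Fintype B
  tree : SimpleGraph B
  conn : tree.Connected
  acyclic : tree.IsAcyclic
  degrees : ∀ b : B, haveI := fin; tree.degree b = 1 ∨ tree.degree b = 3
  leafLabel : {b : B // haveI := fin; tree.degree b = 1} ≃ V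

namespace CarvingDecomp

variable {V : Type*} [Fintype V] {G : SimpleGraph V}

attribute [instance] CarvingDecomp.fin

/-- The side of tree-vertex `x` after removing the tree edge `xy`:
those vertices of `G` whose leaf is still reachable from `x`. -/
def side (c : CarvingDecomp G) (x y : B c) (v : V) : Prop :=
  (c.tree.deleteEdges {s(x, y)}).Reachable x (c.leafLabel.symm v : B c)

/-- The number of edges of `G` crossing the partition of `V` induced by
removing the tree edge `xy`. -/
noncomputable def cross (c : CarvingDecomp G) (x y : B c) : ℕ :=
  (G.edgeFinset.filter fun e =>
    ∃ u ∈ e, ∃ v ∈ e, c.side x y u ∧ c.side y x v).card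

/-- The width of a carving decomposition. -/
noncomputable def width (c : CarvingDecomp G) : ℕ :=
  sSup {t | ∃ x y : B c, c.tree.Adj x y ∧ c.cross x y = t}

end CarvingDecomp

/-- The carving width of `G`. -/
noncomputable def carvingWidth {V : Type*} [Fintype V] (G : SimpleGraph V) : ℕ :=
  sInf {t | ∃ c : CarvingDecomp G, c.width = t}

/-- Edge separation number of a cut of a linear arrangement. -/
noncomputable def edgeSep {V : Type*} [Fintype V] (G : SimpleGraph V)
    (σ : Fin (Fintype.card V) ≃ V) (k : ℕ) : ℕ :=
  (G.edgeFinset.filter fun e =>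
    ∃ u ∈ e, ∃ v ∈ e, ((σ.symm u : ℕ) < k ∧ k ≤ (σ.symm v : ℕ))).card

/-- The cutwidth of `G`. -/
noncomputable def cutwidth {V : Type*} [Fintype V] (G : SimpleGraph V) : ℕ :=
  sInf {t | ∃ σ : Fin (Fintype.card V) ≃ V,
    (Finset.range (Fintype.card V)).sup (edgeSep G σ) = t}


namespace Stmt9

def att (m k : ℕ) : ℕ := min (k - 1) (m - 1)

def catG (m : ℕ) : SimpleGraph (Fin (m+2) ⊕ Fin m) where
  Adj a b := match a, b with
    | .inl k, .inl k' => m = 0 ∧ k ≠ k'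
    | .inl k, .inr i => (i : ℕ) = att m k
    | .inr i, .inl k => (i : ℕ) = att m k
    | .inr i, .inr j => (i:ℕ)+1 = (j:ℕ) ∨ (j:ℕ)+1 = (i:ℕ)
  symm := ⟨by rintro (k|i) (k'|j) h <;> simp_all <;> tauto⟩
  loopless := ⟨by rintro (k|i) h <;> simp_all⟩

lemma adj_ll {m} {k k' : Fin (m+2)} :
    (catG m).Adj (.inl k) (.inl k') ↔ m = 0 ∧ k ≠ k' := Iff.rfl
lemma adj_lr {m} {k : Fin (m+2)} {i : Fin m} :
    (catG m).Adj (.inl k) (.inr i) ↔ (i : ℕ) = att m k := Iff.rfl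
lemma adj_rl {m} {k : Fin (m+2)} {i : Fin m} :
    (catG m).Adj (.inr i) (.inl k) ↔ (i : ℕ) = att m k := Iff.rfl
lemma adj_rr {m} {i j : Fin m} :
    (catG m).Adj (.inr i) (.inr j) ↔ (i:ℕ)+1 = (j:ℕ) ∨ (j:ℕ)+1 = (i:ℕ) := Iff.rfl

lemma deg_inl (m) (k : Fin (m+2)) : (catG m).degree (.inl k) = 1 := by
  rcases Nat.eq_zero_or_pos m with hm | hm
  · subst hm
    rw [SimpleGraph.degree,
      show (catG 0).neighborFinset (.inl k) = {Sum.inl ⟨1 - k.val, by omega⟩} from ?_,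
      Finset.card_singleton]
    ext b
    rcases b with k' | i
    · obtain ⟨k, hk⟩ := k; obtain ⟨k', hk'⟩ := k'
      simp [SimpleGraph.mem_neighborFinset, adj_ll, Fin.ext_iff]
      omega
    · exact i.elim0
  · rw [SimpleGraph.degree,
      show (catG m).neighborFinset (.inl k) = {Sum.inr ⟨att m k, by simp [att]; omega⟩} from ?_,
      Finset.card_singleton]
    ext b
    rcases b with k' | i
    · simp [SimpleGraph.mem_neighborFinset, adj_ll]
      omega
    · obtain ⟨i, hi⟩ := i
      simp [SimpleGraph.mem_neighborFinset, adj_lr, Fin.ext_iff]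

lemma deg_inr (m) (i : Fin m) : (catG m).degree (.inr i) = 3 := by
  obtain ⟨i, hi⟩ := i
  have hm : 1 ≤ m := by omega
  rcases Nat.lt_or_ge 1 m with hm2 | hm1
  · -- m ≥ 2
    rcases Nat.eq_zero_or_pos i with h0 | h0
    · subst h0
      rw [SimpleGraph.degree,
        show (catG m).neighborFinset (.inr ⟨0, hi⟩) =
          {Sum.inl ⟨0, by omega⟩, Sum.inl ⟨1, by omega⟩, Sum.inr ⟨1, by omega⟩} from ?_]
      · rw [Finset.card_insert_of_notMem (by simp [Fin.ext_iff]),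
          Finset.card_insert_of_notMem (by simp), Finset.card_singleton]
      ext b
      rcases b with ⟨k', hk'⟩ | ⟨j, hj⟩
      · simp [SimpleGraph.mem_neighborFinset, adj_rl, att, Fin.ext_iff]
        omega
      · simp [SimpleGraph.mem_neighborFinset, adj_rr, Fin.ext_iff]
        omega
    rcases Nat.lt_or_ge i (m-1) with htop | htop
    · -- middle
      rw [SimpleGraph.degree,
        show (catG m).neighborFinset (.inr ⟨i, hi⟩) =
          {Sum.inl ⟨i+1, by omega⟩, Sum.inr ⟨i-1, by omega⟩, Sum.inr ⟨i+1, by omega⟩} from ?_]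
      · rw [Finset.card_insert_of_notMem (by simp),
          Finset.card_insert_of_notMem (by simp [Fin.ext_iff] <;> omega), Finset.card_singleton]
      ext b
      rcases b with ⟨k', hk'⟩ | ⟨j, hj⟩
      · simp [SimpleGraph.mem_neighborFinset, adj_rl, att, Fin.ext_iff]
        omega
      · simp [SimpleGraph.mem_neighborFinset, adj_rr, Fin.ext_iff]
        omega
    · -- i = m-1
      rw [SimpleGraph.degree,
        show (catG m).neighborFinset (.inr ⟨i, hi⟩) =
          {Sum.inl ⟨m, by omega⟩, Sum.inl ⟨m+1, by omega⟩, Sum.inr ⟨m-2, by omega⟩} from ?_]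
      · rw [Finset.card_insert_of_notMem (by simp [Fin.ext_iff] <;> omega),
          Finset.card_insert_of_notMem (by simp), Finset.card_singleton]
      ext b
      rcases b with ⟨k', hk'⟩ | ⟨j, hj⟩
      · simp [SimpleGraph.mem_neighborFinset, adj_rl, att, Fin.ext_iff]
        omega
      · simp [SimpleGraph.mem_neighborFinset, adj_rr, Fin.ext_iff]
        omega
  · -- m = 1, i = 0
    have : m = 1 := by omega
    subst this
    have : i = 0 := by omega
    subst this
    rw [SimpleGraph.degree,
      show (catG 1).neighborFinset (.inr ⟨0, hi⟩) =
        {Sum.inl ⟨0, by omega⟩, Sum.inl ⟨1, by omega⟩, Sum.inl ⟨2, by omega⟩} from ?_]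
    · rw [Finset.card_insert_of_notMem (by simp [Fin.ext_iff]),
        Finset.card_insert_of_notMem (by simp [Fin.ext_iff]), Finset.card_singleton]
    ext b
    rcases b with ⟨k', hk'⟩ | ⟨j, hj⟩
    · simp [SimpleGraph.mem_neighborFinset, adj_rl, att, Fin.ext_iff]
      omega
    · simp [SimpleGraph.mem_neighborFinset, adj_rr, Fin.ext_iff]
      omega

end Stmt9

namespace Stmt9

lemma cat_conn (m : ℕ) : (catG m).Connected := by
  rw [SimpleGraph.connected_iff]
  refine ⟨?_, ⟨.inl 0⟩⟩
  have hspine : ∀ i : ℕ, ∀ h : i < m,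
      (catG m).Reachable (.inr ⟨0, by omega⟩) (.inr ⟨i, h⟩) := by
    intro i
    induction i with
    | zero => intro h; exact SimpleGraph.Reachable.refl _
    | succ i ih =>
      intro h
      exact (ih (by omega)).trans ((adj_rr.mpr (Or.inl rfl)).reachable)
  intro u v
  suffices H : ∀ b, (catG m).Reachable (Sum.inl 0) b by exact (H u).symm.trans (H v)
  intro b
  rcases Nat.eq_zero_or_pos m with hm | hm
  · subst hm
    rcases b with k | i
    · by_cases hk : (0 : Fin 2) = k
      · rw [← hk]
      · exact ((adj_ll.mpr ⟨rfl, hk⟩).reachable)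
    · exact i.elim0
  · have h0 : (catG m).Reachable (Sum.inl 0) (Sum.inr ⟨0, hm⟩) := by
      refine (adj_lr.mpr ?_).reachable
      simp [att]
    rcases b with k | i
    · refine (h0.trans ((hspine (att m (k:ℕ)) (by simp [att]; omega)).trans ?_))
      exact (adj_rl.mpr rfl).reachable
    · obtain ⟨i, hi⟩ := i
      exact h0.trans (hspine i hi)

lemma reach_closed {W : Type*} {G : SimpleGraph W} {S : W → Prop}
    (hcl : ∀ a b, G.Adj a b → (S a ↔ S b)) {x y : W} (h : G.Reachable x y) (hx : S x) : S y := by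
  obtain ⟨p⟩ := h
  induction p with
  | nil => exact hx
  | cons h p ih => exact ih ((hcl _ _ h).mp hx)

/-- the left set for a spine edge -/
def spineSet (m : ℕ) (i : ℕ) : (Fin (m+2) ⊕ Fin m) → Prop :=
  fun b => match b with
  | .inl k => (k : ℕ) ≤ i + 1
  | .inr l => (l : ℕ) ≤ i

lemma closed_spine (m : ℕ) {i j : Fin m} (hij : (i:ℕ)+1 = (j:ℕ)) :
    ∀ a b, ((catG m).deleteEdges {s(Sum.inr i, Sum.inr j)}).Adj a b →
      (spineSet m i a ↔ spineSet m i b) := by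
  intro a b hab
  rw [SimpleGraph.deleteEdges_adj] at hab
  obtain ⟨hab, hne⟩ := hab
  simp only [Set.mem_singleton_iff, Sym2.eq_iff] at hne
  have hj := j.2
  rcases a with k | l <;> rcases b with k' | l'
  · rw [adj_ll] at hab; omega
  · rw [adj_lr] at hab
    obtain ⟨k, hk⟩ := k; obtain ⟨l', hl'⟩ := l'
    simp only [spineSet, att] at hab ⊢
    omega
  · rw [adj_rl] at hab
    obtain ⟨k', hk'⟩ := k'; obtain ⟨l, hl⟩ := l
    simp only [spineSet, att] at hab ⊢
    omega
  · rw [adj_rr] at hab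
    simp only [Sum.inr.injEq, Fin.ext_iff] at hne
    simp only [spineSet]
    omega

lemma nbr_unique (m : ℕ) (k : Fin (m+2)) {b b'}
    (h : (catG m).Adj (.inl k) b) (h' : (catG m).Adj (.inl k) b') : b = b' := by
  rcases b with k1 | i1 <;> rcases b' with k2 | i2
  · rw [adj_ll] at h h'
    obtain ⟨hm, _⟩ := h
    subst hm
    obtain ⟨k, hk⟩ := k; obtain ⟨k1, hk1⟩ := k1; obtain ⟨k2, hk2⟩ := k2
    simp only [ne_eq, Fin.mk.injEq, Sum.inl.injEq] at *
    omega
  · rw [adj_ll] at h; rw [adj_lr] at h'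
    obtain ⟨hm, _⟩ := h; subst hm; exact i2.elim0
  · rw [adj_ll] at h'; rw [adj_lr] at h
    obtain ⟨hm, _⟩ := h'; subst hm; exact i1.elim0
  · rw [adj_lr] at h h'
    rw [Sum.inr.injEq, Fin.ext_iff]
    omega

lemma closed_leaf (m : ℕ) (k : Fin (m+2)) {y} (hxy : (catG m).Adj (.inl k) y) :
    ∀ a b, ((catG m).deleteEdges {s(Sum.inl k, y)}).Adj a b →
      ((a = Sum.inl k) ↔ (b = Sum.inl k)) := by
  intro a b hab
  rw [SimpleGraph.deleteEdges_adj] at hab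
  obtain ⟨hab, hne⟩ := hab
  simp only [Set.mem_singleton_iff] at hne
  constructor
  · rintro rfl
    rw [nbr_unique m k hab hxy] at hne
    exact absurd rfl hne
  · rintro rfl
    rw [nbr_unique m k hab.symm hxy, Sym2.eq_swap] at hne
    exact absurd rfl hne

end Stmt9

namespace Stmt9

lemma cat_acyclic (m : ℕ) : (catG m).IsAcyclic := by
  rw [SimpleGraph.isAcyclic_iff_forall_adj_isBridge]
  intro x y hxy
  rw [SimpleGraph.isBridge_iff]
  intro hreach
  have hreach' : ((catG m).deleteEdges {s(x, y)}).Reachable x y := hreach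
  rcases x with k | i
  · have := reach_closed (closed_leaf m k hxy) hreach' rfl
    exact hxy.ne this.symm
  · rcases y with k | j
    · have hreach'' : ((catG m).deleteEdges {s(Sum.inl k, Sum.inr i)}).Reachable
          (Sum.inl k) (Sum.inr i) := by
        have hset : ({s(Sum.inl k, Sum.inr i)} : Set (Sym2 (Fin (m+2) ⊕ Fin m)))
            = {s(Sum.inr i, Sum.inl k)} := by rw [Sym2.eq_swap]
        rw [hset]; exact hreach'.symm
      have := reach_closed (closed_leaf m k hxy.symm) hreach'' rfl
      exact hxy.ne' this.symm
    · rcases adj_rr.mp hxy with hij | hij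
      · have := reach_closed (closed_spine m hij) hreach'
          (show spineSet m i (Sum.inr i) from le_refl _)
        simp only [spineSet] at this
        omega
      · have hset : ({s(Sum.inr i, Sum.inr j)} : Set (Sym2 (Fin (m+2) ⊕ Fin m)))
            = {s(Sum.inr j, Sum.inr i)} := by rw [Sym2.eq_swap]
        rw [hset] at hreach'
        have := reach_closed (closed_spine m hij) hreach'.symm
          (show spineSet m j (Sum.inr j) from le_refl _)
        simp only [spineSet] at this
        omega

variable {V : Type*} [Fintype V]

noncomputable def catDecomp (G : SimpleGraph V) (m : ℕ) (h : m + 2 = Fintype.card V)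
    (σ : Fin (Fintype.card V) ≃ V) : CarvingDecomp G where
  B := Fin (m+2) ⊕ Fin m
  fin := inferInstance
  tree := catG m
  conn := cat_conn m
  acyclic := cat_acyclic m
  degrees := by
    rintro (k | i)
    · exact Or.inl (deg_inl m k)
    · exact Or.inr (deg_inr m i)
  leafLabel :=
    { toFun := fun b => σ (Fin.cast h (Sum.elim id (fun _ => 0) b.1))
      invFun := fun v => ⟨Sum.inl (Fin.cast h.symm (σ.symm v)), deg_inl m _⟩
      left_inv := by
        rintro ⟨k | i, hb⟩
        · apply Subtype.ext
          simp
        · exact absurd hb (by rw [deg_inr]; omega)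
      right_inv := fun v => by simp }

lemma catDecomp_side (G : SimpleGraph V) (m : ℕ) (h : m + 2 = Fintype.card V)
    (σ : Fin (Fintype.card V) ≃ V) (x y : Fin (m+2) ⊕ Fin m) (u : V) :
    (catDecomp G m h σ).side x y u ↔
      ((catG m).deleteEdges {s(x, y)}).Reachable x (Sum.inl (Fin.cast h.symm (σ.symm u))) :=
  Iff.rfl

end Stmt9


namespace Stmt9

variable {V : Type*} [Fintype V] {m : ℕ}

lemma side_leaf_eq (G : SimpleGraph V) (h : m + 2 = Fintype.card V)
    (σ : Fin (Fintype.card V) ≃ V) (k : Fin (m+2)) {y : Fin (m+2) ⊕ Fin m} {u : V}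
    (hxy : (catG m).Adj (.inl k) y)
    (hs : ((catG m).deleteEdges {s(Sum.inl k, y)}).Reachable (.inl k)
      (Sum.inl (Fin.cast h.symm (σ.symm u)))) :
    u = σ (Fin.cast h k) := by
  have h2 : Sum.inl (Fin.cast h.symm (σ.symm u)) = (Sum.inl k : Fin (m+2) ⊕ Fin m) :=
    reach_closed (S := fun b => b = Sum.inl k) (closed_leaf m k hxy) hs rfl
  rw [Sum.inl.injEq] at h2
  have : σ.symm u = Fin.cast h k := by
    rw [← h2]; ext; simp
  rw [← this, Equiv.apply_symm_apply]

lemma side_spine_left (G : SimpleGraph V) (h : m + 2 = Fintype.card V)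
    (σ : Fin (Fintype.card V) ≃ V) {i j : Fin m} (hij : (i:ℕ)+1 = (j:ℕ)) {u : V}
    (hs : ((catG m).deleteEdges {s(Sum.inr i, Sum.inr j)}).Reachable (.inr i)
      (Sum.inl (Fin.cast h.symm (σ.symm u)))) :
    ((σ.symm u : ℕ)) < (i:ℕ) + 2 := by
  have := reach_closed (closed_spine m hij) hs (show spineSet m (i:ℕ) (Sum.inr i) from le_refl _)
  simp only [spineSet, Fin.coe_cast] at this
  omega

lemma side_spine_right (G : SimpleGraph V) (h : m + 2 = Fintype.card V)
    (σ : Fin (Fintype.card V) ≃ V) {i j : Fin m} (hij : (i:ℕ)+1 = (j:ℕ)) {v : V}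
    (hs : ((catG m).deleteEdges {s(Sum.inr j, Sum.inr i)}).Reachable (.inr j)
      (Sum.inl (Fin.cast h.symm (σ.symm v)))) :
    (i:ℕ) + 2 ≤ (σ.symm v : ℕ) := by
  have hset : ({s(Sum.inr j, Sum.inr i)} : Set (Sym2 (Fin (m+2) ⊕ Fin m)))
      = {s(Sum.inr i, Sum.inr j)} := by rw [Sym2.eq_swap]
  rw [hset] at hs
  have hcl : ∀ a b, ((catG m).deleteEdges {s(Sum.inr i, Sum.inr j)}).Adj a b →
      (¬ spineSet m (i:ℕ) a ↔ ¬ spineSet m (i:ℕ) b) :=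
    fun a b hab => not_congr (closed_spine m hij a b hab)
  have := reach_closed hcl hs (show ¬ spineSet m (i:ℕ) (Sum.inr j) by simp [spineSet]; omega)
  simp only [spineSet, Fin.coe_cast] at this
  omega

lemma cross_le_deg (G : SimpleGraph V) [DecidableRel G.Adj] (h : m + 2 = Fintype.card V)
    (σ : Fin (Fintype.card V) ≃ V) {x y : Fin (m+2) ⊕ Fin m} (k : Fin (m+2))
    (hk : x = Sum.inl k ∨ y = Sum.inl k) (hxy : (catG m).Adj x y) :
    (catDecomp G m h σ).cross x y ≤ G.maxDegree := by
  classical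
  refine le_trans (Finset.card_le_card (t := G.incidenceFinset (σ (Fin.cast h k)))
      fun e he => ?_)
    (le_trans (le_of_eq (G.card_incidenceFinset_eq_degree _)) (G.degree_le_maxDegree _))
  rw [Finset.mem_filter] at he
  obtain ⟨heE, u, hu, v, hv, hsu, hsv⟩ := he
  simp only [SimpleGraph.mem_edgeFinset] at heE
  rw [SimpleGraph.mem_incidenceFinset]
  rcases hk with rfl | rfl
  · have : u = σ (Fin.cast h k) :=
      side_leaf_eq G h σ k hxy ((catDecomp_side G m h σ _ y u).mp hsu)
    exact ⟨heE, this ▸ hu⟩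
  · have : v = σ (Fin.cast h k) :=
      side_leaf_eq G h σ k hxy.symm ((catDecomp_side G m h σ _ x v).mp hsv)
    exact ⟨heE, this ▸ hv⟩

lemma cross_le_sep (G : SimpleGraph V) [DecidableRel G.Adj] (h : m + 2 = Fintype.card V)
    (σ : Fin (Fintype.card V) ≃ V) {i j : Fin m} (hij : (i:ℕ)+1 = (j:ℕ)) :
    (catDecomp G m h σ).cross (Sum.inr i) (Sum.inr j) ≤ edgeSep G σ ((i:ℕ)+2) := by
  classical
  apply Finset.card_le_card
  intro e he
  rw [Finset.mem_filter] at he ⊢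
  obtain ⟨heE, u, hu, v, hv, hsu, hsv⟩ := he
  refine ⟨heE, u, hu, v, hv, ?_, ?_⟩
  · exact side_spine_left G h σ hij ((catDecomp_side G m h σ _ _ u).mp hsu)
  · exact side_spine_right G h σ hij ((catDecomp_side G m h σ _ _ v).mp hsv)

lemma cross_le (G : SimpleGraph V) [DecidableRel G.Adj] (h : m + 2 = Fintype.card V)
    (σ : Fin (Fintype.card V) ≃ V) {x y : Fin (m+2) ⊕ Fin m} (hxy : (catG m).Adj x y) :
    (catDecomp G m h σ).cross x y ≤
      max ((Finset.range (Fintype.card V)).sup (edgeSep G σ)) G.maxDegree := by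
  rcases x with k | i
  · exact le_trans (cross_le_deg G h σ k (Or.inl rfl) hxy) (le_max_right _ _)
  · rcases y with k | j
    · exact le_trans (cross_le_deg G h σ k (Or.inr rfl) hxy) (le_max_right _ _)
    · refine le_trans ?_ (le_max_left _ _)
      rcases adj_rr.mp hxy with hij | hij
      · refine le_trans (cross_le_sep G h σ hij) (Finset.le_sup ?_)
        rw [Finset.mem_range]
        omega
      · have hswap : (catDecomp G m h σ).cross (Sum.inr i) (Sum.inr j) ≤
            edgeSep G σ ((j:ℕ)+2) := by
          have hle := cross_le_sep G h σ (i := j) (j := i) hij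
          refine le_trans (le_of_eq ?_) hle
          unfold CarvingDecomp.cross
          congr 1
          apply Finset.filter_congr
          intro e _
          constructor
          · rintro ⟨u, hu, v, hv, hsu, hsv⟩
            exact ⟨v, hv, u, hu, hsv, hsu⟩
          · rintro ⟨u, hu, v, hv, hsu, hsv⟩
            exact ⟨v, hv, u, hu, hsv, hsu⟩
        refine le_trans hswap (Finset.le_sup ?_)
        rw [Finset.mem_range]
        omega

end Stmt9


lemma Stmt9.no_decomp {V : Type*} [Fintype V] (G : SimpleGraph V)
    (hn : Fintype.card V < 2) (c : CarvingDecomp G) : False := by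
  classical
  have htree : c.tree.IsTree := ⟨c.conn, c.acyclic⟩
  have hE := htree.card_edgeFinset
  have hsum := SimpleGraph.sum_degrees_eq_twice_card_edges c.tree
  have hLV : (Finset.univ.filter (fun b : c.B => c.tree.degree b = 1)).card
      = Fintype.card V := by
    rw [← Fintype.card_subtype]
    exact Fintype.card_congr c.leafLabel
  have hsplit : (Finset.univ.filter fun b : c.B => c.tree.degree b = 1).card
      + (Finset.univ.filter fun b : c.B => ¬ c.tree.degree b = 1).card = Fintype.card c.B :=
    Finset.card_filter_add_card_filter_not _
  have h1 : ∑ b ∈ Finset.univ.filter (fun b : c.B => c.tree.degree b = 1), c.tree.degree b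
      = (Finset.univ.filter fun b : c.B => c.tree.degree b = 1).card := by
    rw [Finset.sum_congr rfl (fun b hb => (Finset.mem_filter.mp hb).2)]
    simp
  have h3 : ∑ b ∈ Finset.univ.filter (fun b : c.B => ¬ c.tree.degree b = 1), c.tree.degree b
      = 3 * (Finset.univ.filter fun b : c.B => ¬ c.tree.degree b = 1).card := by
    rw [Finset.sum_congr rfl
      (fun b hb => (c.degrees b).resolve_left (Finset.mem_filter.mp hb).2)]
    simp [mul_comm]
  have hB1 : 1 ≤ Fintype.card c.B := Fintype.card_pos_iff.mpr c.conn.nonempty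
  have hadd := Finset.sum_filter_add_sum_filter_not Finset.univ
    (fun b : c.B => c.tree.degree b = 1) (fun b => c.tree.degree b)
  omega

theorem stmt_9 {V : Type*} [Fintype V] (G : SimpleGraph V) [DecidableRel G.Adj]
    (w d : ℕ) (hw : cutwidth G ≤ w) (hd : G.maxDegree ≤ d) :
    carvingWidth G ≤ max w d := by
  rcases Nat.lt_or_ge (Fintype.card V) 2 with hn | hn
  · have hempty : {t | ∃ c : CarvingDecomp G, c.width = t} = ∅ := by
      ext t
      simp only [Set.mem_setOf_eq, Set.mem_empty_iff_false, iff_false, not_exists]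
      intro c _
      exact Stmt9.no_decomp G hn c
    rw [carvingWidth, hempty, Nat.sInf_empty]
    exact Nat.zero_le _
  · have h : (Fintype.card V - 2) + 2 = Fintype.card V := by omega
    have hcwmem : cutwidth G ∈ {t | ∃ σ : Fin (Fintype.card V) ≃ V,
        (Finset.range (Fintype.card V)).sup (edgeSep G σ) = t} :=
      Nat.sInf_mem ⟨_, (Fintype.equivFin V).symm, rfl⟩
    obtain ⟨σ, hσ⟩ := hcwmem
    have hsup : (Finset.range (Fintype.card V)).sup (edgeSep G σ) ≤ w := by
      rw [hσ]; exact hw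
    have hwid : (Stmt9.catDecomp G (Fintype.card V - 2) h σ).width ≤ max w d := by
      refine csSup_le' ?_
      rintro t ⟨x, y, hxy, rfl⟩
      exact le_trans (Stmt9.cross_le G h σ hxy) (max_le_max hsup hd)
    exact le_trans (Nat.sInf_le ⟨_, rfl⟩) hwid
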